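/- A labelled poset P on {1,...,n} is an interval-poset (i.e., there exist binary trees T₁ ≤ T₂ in the Tamari order such that the linear extensions of P are exactly the union of the sylvester classes of all trees in the interval [T₁, T₂]) if and only if P satisfies: (1) whenever a < c and a ⊴ c in P, then b ⊴ c for all a < b < c; and (2) whenever a < c and c ⊴ a in P, then b ⊴ a for all a < b < c. This gives a bijection between such posets and intervals of the Tamari lattice on trees of size n. -/

import Mathlib

/-- Unlabelled binary trees. -/
inductive Tree0 where
  | leaf : Tree0
  | node : Tree0 → Tree0 → Tree0
deriving DecidableEq

namespace Tree0

/-- Number of nodes. -/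
def size : Tree0 → ℕ
  | leaf => 0
  | node l r => size l + size r + 1

/-- One right rotation somewhere in the tree: `y(x(A,B),C) ↦ x(A,y(B,C))`. -/
inductive Rot : Tree0 → Tree0 → Prop
  | root (A B C : Tree0) : Rot (node (node A B) C) (node A (node B C))
  | left {l l' : Tree0} (r : Tree0) : Rot l l' → Rot (node l r) (node l' r)
  | right (l : Tree0) {r r' : Tree0} : Rot r r' → Rot (node l r) (node l r')

/-- The Tamari order: transitive closure of right rotation. -/
def tamariLE : Tree0 → Tree0 → Prop := Relation.ReflTransGen Rot

end Tree0

/-- Labelled binary trees (labels in `ℕ`). -/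
inductive BT where
  | leaf : BT
  | node : BT → ℕ → BT → BT
deriving DecidableEq

namespace BT

/-- Binary search tree insertion: `k` goes left if `≤` the root, right if `>`. -/
def bstInsert (k : ℕ) : BT → BT
  | leaf => node leaf k leaf
  | node l x r => if k ≤ x then node (bstInsert k l) x r else node l x (bstInsert k r)

/-- Insert the letters of a word from right to left into an empty BST. -/
def abr (w : List ℕ) : BT := w.foldr bstInsert leaf

/-- Underlying unlabelled shape. -/
def shape : BT → Tree0
  | leaf => Tree0.leaf
  | node l _ r => Tree0.node (shape l) (shape r)

end BT

/-- The word of values of a permutation of `{1,…,n}`. -/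
def wordOf {n : ℕ} (σ : Equiv.Perm (Fin n)) : List ℕ :=
  List.ofFn fun i => (σ i : ℕ) + 1

/-- The binary search tree shape of a permutation (its sylvester class). -/
def abrShape {n : ℕ} (σ : Equiv.Perm (Fin n)) : Tree0 :=
  BT.shape (BT.abr (wordOf σ))

/-- `σ` is a linear extension of the partial order `le` on labels: whenever `a ⊴ b`,
the value `a` occurs no later than `b` in the word of `σ` (position of value `a`
is `σ⁻¹ a`). -/
def IsLinExtOf {n : ℕ} (le : Fin n → Fin n → Prop) (σ : Equiv.Perm (Fin n)) : Prop :=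
  ∀ a b : Fin n, le a b → σ⁻¹ a ≤ σ⁻¹ b

namespace Tree0

/-- Right-subtree size of the node labelled `a`, labels `k+1..k+size`. -/
def Rv : Tree0 → ℕ → ℕ → ℕ
  | leaf, _, _ => 0
  | node l r, k, a =>
    if a < k + l.size + 1 then Rv l k a
    else if a = k + l.size + 1 then r.size
    else Rv r (k + l.size + 1) a

/-- Left-subtree size of the node labelled `a`. -/
def Lv : Tree0 → ℕ → ℕ → ℕ
  | leaf, _, _ => 0
  | node l r, k, a =>
    if a < k + l.size + 1 then Lv l k a
    else if a = k + l.size + 1 then l.size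
    else Lv r (k + l.size + 1) a

lemma rv_node_lt {l r : Tree0} {k a : ℕ} (h : a < k + l.size + 1) :
    Rv (node l r) k a = Rv l k a := by simp [Rv, h]

lemma rv_node_eq {l r : Tree0} {k a : ℕ} (h : a = k + l.size + 1) :
    Rv (node l r) k a = r.size := by simp [Rv, h]

lemma rv_node_gt {l r : Tree0} {k a : ℕ} (h : k + l.size + 1 < a) :
    Rv (node l r) k a = Rv r (k + l.size + 1) a := by
  simp only [Rv]; rw [if_neg (by omega), if_neg (by omega)]

lemma lv_node_lt {l r : Tree0} {k a : ℕ} (h : a < k + l.size + 1) :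
    Lv (node l r) k a = Lv l k a := by simp [Lv, h]

lemma lv_node_eq {l r : Tree0} {k a : ℕ} (h : a = k + l.size + 1) :
    Lv (node l r) k a = l.size := by simp [Lv, h]

lemma lv_node_gt {l r : Tree0} {k a : ℕ} (h : k + l.size + 1 < a) :
    Lv (node l r) k a = Lv r (k + l.size + 1) a := by
  simp only [Lv]; rw [if_neg (by omega), if_neg (by omega)]

lemma rv_bound : ∀ (T : Tree0) (k a : ℕ), k < a → a ≤ k + T.size → a + Rv T k a ≤ k + T.size := by
  intro T
  induction T with
  | leaf => intro k a h1 h2; simp [size] at h2; omega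
  | node l r ihl ihr =>
    intro k a h1 h2
    simp only [size] at *
    rcases lt_trichotomy a (k + l.size + 1) with h | h | h
    · rw [rv_node_lt h]; have := ihl k a h1 (by omega); omega
    · rw [rv_node_eq h]; omega
    · rw [rv_node_gt h]
      have := ihr (k + l.size + 1) a (by omega) (by omega); omega

lemma lv_bound : ∀ (T : Tree0) (k a : ℕ), k < a → a ≤ k + T.size → k + Lv T k a < a := by
  intro T
  induction T with
  | leaf => intro k a h1 h2; simp [size] at h2; omega
  | node l r ihl ihr =>
    intro k a h1 h2
    simp only [size] at *
    rcases lt_trichotomy a (k + l.size + 1) with h | h | h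
    · rw [lv_node_lt h]; have := ihl k a h1 (by omega); omega
    · rw [lv_node_eq h]; omega
    · rw [lv_node_gt h]
      have := ihr (k + l.size + 1) a (by omega) (by omega); omega

/-- Nesting of right-subtree intervals. -/
lemma rv_nested : ∀ (T : Tree0) (k x d : ℕ), k < x → x ≤ k + T.size → x < d →
    d ≤ x + Rv T k x → d + Rv T k d ≤ x + Rv T k x := by
  intro T
  induction T with
  | leaf => intro k x d h1 h2; simp [size] at h2; omega
  | node l r ihl ihr =>
    intro k x d h1 h2 h3 h4
    simp only [size] at *
    rcases lt_trichotomy x (k + l.size + 1) with h | h | h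
    · rw [rv_node_lt h] at *
      have hb := rv_bound l k x h1 (by omega)
      rw [rv_node_lt (show d < k + l.size + 1 by omega)]
      exact ihl k x d h1 (by omega) h3 h4
    · rw [rv_node_eq h] at *
      rw [rv_node_gt (show k + l.size + 1 < d by omega)]
      have := rv_bound r (k + l.size + 1) d (by omega) (by omega); omega
    · rw [rv_node_gt h] at *
      rw [rv_node_gt (show k + l.size + 1 < d by omega)]
      exact ihr (k + l.size + 1) x d (by omega) (by omega) h3 h4

/-- If `a` lies in the left subtree of `x`, then `a`'s subtree stays left of `x`. -/
lemma rv_lt_of_left : ∀ (T : Tree0) (k a x : ℕ), k < a → a < x → x ≤ k + T.size →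
    x ≤ a + Lv T k x → a + Rv T k a < x := by
  intro T
  induction T with
  | leaf => intro k a x h1 h2 h3; simp [size] at h3; omega
  | node l r ihl ihr =>
    intro k a x h1 h2 h3 h4
    simp only [size] at *
    rcases lt_trichotomy x (k + l.size + 1) with h | h | h
    · rw [lv_node_lt h] at h4
      rw [rv_node_lt (show a < k + l.size + 1 by omega)]
      exact ihl k a x h1 h2 (by omega) h4
    · rw [lv_node_eq h] at h4
      rw [rv_node_lt (show a < k + l.size + 1 by omega)]
      have := rv_bound l k a h1 (by omega); omega
    · rw [lv_node_gt h] at h4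
      rcases lt_trichotomy a (k + l.size + 1) with h' | h' | h'
      · have := lv_bound r (k + l.size + 1) x (by omega) (by omega); omega
      · have := lv_bound r (k + l.size + 1) x (by omega) (by omega); omega
      · rw [rv_node_gt h']
        exact ihr (k + l.size + 1) a x (by omega) h2 (by omega) h4

/-- Boundary lemma: `a` lies in the left subtree of `d := a + Rv a + 1`. -/
lemma lv_boundary : ∀ (T : Tree0) (k a : ℕ), k < a → a + Rv T k a + 1 ≤ k + T.size →
    Rv T k a < Lv T k (a + Rv T k a + 1) := by
  intro T
  induction T with
  | leaf => intro k a h1 h2; simp [size] at h2; omega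
  | node l r ihl ihr =>
    intro k a h1 h2
    simp only [size] at *
    rcases lt_trichotomy a (k + l.size + 1) with h | h | h
    · rw [rv_node_lt h] at *
      have hb := rv_bound l k a h1 (by omega)
      rcases lt_or_eq_of_le (show a + Rv l k a + 1 ≤ k + l.size + 1 by omega) with h' | h'
      · rw [lv_node_lt h']
        exact ihl k a h1 (by omega)
      · rw [lv_node_eq h']
        omega
    · rw [rv_node_eq h] at *
      omega
    · rw [rv_node_gt h] at *
      have hb := rv_bound r (k + l.size + 1) a (by omega) (by omega)
      rw [lv_node_gt (show k + l.size + 1 < a + Rv r (k + l.size + 1) a + 1 by omega)]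
      exact ihr (k + l.size + 1) a (by omega) (by omega)

lemma size_rot : ∀ {T T' : Tree0}, Rot T T' → T'.size = T.size := by
  intro T T' h
  induction h with
  | root A B C => simp [size]; omega
  | left r _ ih => simp [size]; omega
  | right l _ ih => simp [size]; omega

lemma size_tamari {T T' : Tree0} (h : tamariLE T T') : T'.size = T.size := by
  induction h with
  | refl => rfl
  | tail _ hr ih => rw [size_rot hr, ih]

lemma rv_rot : ∀ {T T' : Tree0}, Rot T T' → ∀ k a, Rv T k a ≤ Rv T' k a := by
  intro T T' h
  induction h with
  | root A B C =>
    intro k a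
    set x := k + A.size + 1 with hx
    have hsz : (node A B).size = A.size + B.size + 1 := rfl
    have hy : k + (node A B).size + 1 = x + B.size + 1 := by rw [hsz]; omega
    rcases lt_trichotomy a x with h | h | h
    · rw [rv_node_lt (by rw [hsz]; omega), rv_node_lt h, rv_node_lt h]
    · rw [rv_node_lt (by rw [hsz]; omega), rv_node_eq h, rv_node_eq h]
      simp [size]; omega
    · rcases lt_trichotomy a (x + B.size + 1) with h' | h' | h'
      · rw [rv_node_lt (by rw [hsz]; omega), rv_node_gt h, rv_node_gt h,
          rv_node_lt (by omega)]
      · rw [rv_node_eq (by omega), rv_node_gt h, rv_node_eq (by omega)]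
      · rw [rv_node_gt (by rw [hsz]; omega), rv_node_gt h, rv_node_gt (by omega), hy]
  | left r hr ih =>
    intro k a
    rcases lt_trichotomy a (k + _root_.Tree0.size _ + 1) with h | h | h
    · rw [rv_node_lt h, rv_node_lt (by rw [size_rot hr]; exact h)]; exact ih k a
    · rw [rv_node_eq h, rv_node_eq (by rw [size_rot hr]; exact h)]
    · rw [rv_node_gt h, rv_node_gt (by rw [size_rot hr]; exact h), size_rot hr]
  | right l hr ih =>
    intro k a
    rcases lt_trichotomy a (k + l.size + 1) with h | h | h
    · rw [rv_node_lt h, rv_node_lt h]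
    · rw [rv_node_eq h, rv_node_eq h, size_rot hr]
    · rw [rv_node_gt h, rv_node_gt h]; exact ih _ a

lemma lv_rot : ∀ {T T' : Tree0}, Rot T T' → ∀ k a, Lv T' k a ≤ Lv T k a := by
  intro T T' h
  induction h with
  | root A B C =>
    intro k a
    set x := k + A.size + 1 with hx
    have hsz : (node A B).size = A.size + B.size + 1 := rfl
    have hy : k + (node A B).size + 1 = x + B.size + 1 := by rw [hsz]; omega
    rcases lt_trichotomy a x with h | h | h
    · rw [lv_node_lt h, lv_node_lt (show a < k + (node A B).size + 1 by rw [hsz]; omega),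
        lv_node_lt h]
    · rw [lv_node_eq h, lv_node_lt (show a < k + (node A B).size + 1 by rw [hsz]; omega),
        lv_node_eq h]
    · rcases lt_trichotomy a (x + B.size + 1) with h' | h' | h'
      · rw [lv_node_gt h, lv_node_lt (show a < x + B.size + 1 by omega),
          lv_node_lt (show a < k + (node A B).size + 1 by rw [hsz]; omega), lv_node_gt h]
      · rw [lv_node_gt h, lv_node_eq (show a = x + B.size + 1 by omega),
          lv_node_eq (show a = k + (node A B).size + 1 by rw [hsz]; omega), hsz]
        omega
      · rw [lv_node_gt h, lv_node_gt (show x + B.size + 1 < a by omega),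
          lv_node_gt (show k + (node A B).size + 1 < a by rw [hsz]; omega), hy]
  | left r hr ih =>
    rename_i l l'
    intro k a
    have hs : l'.size = l.size := size_rot hr
    rcases lt_trichotomy a (k + l.size + 1) with h | h | h
    · rw [lv_node_lt (show a < k + l'.size + 1 by omega), lv_node_lt h]; exact ih k a
    · rw [lv_node_eq (show a = k + l'.size + 1 by omega), lv_node_eq h, hs]
    · rw [lv_node_gt (show k + l'.size + 1 < a by omega), lv_node_gt h, hs]
  | right l hr ih =>
    intro k a
    rcases lt_trichotomy a (k + l.size + 1) with h | h | h
    · rw [lv_node_lt h, lv_node_lt h]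
    · rw [lv_node_eq h, lv_node_eq h]
    · rw [lv_node_gt h, lv_node_gt h]; exact ih _ a

lemma rv_tamari {T T' : Tree0} (h : tamariLE T T') : ∀ k a, Rv T k a ≤ Rv T' k a := by
  induction h with
  | refl => intro k a; exact le_rfl
  | tail _ hr ih => intro k a; exact (ih k a).trans (rv_rot hr k a)

lemma lv_tamari {T T' : Tree0} (h : tamariLE T T') : ∀ k a, Lv T' k a ≤ Lv T k a := by
  induction h with
  | refl => intro k a; exact le_rfl
  | tail _ hr ih => intro k a; exact (lv_rot hr k a).trans (ih k a)

lemma tamari_node {l l' r r' : Tree0} (hl : tamariLE l l') (hr : tamariLE r r') :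
    tamariLE (node l r) (node l' r') := by
  have h1 : tamariLE (node l r) (node l' r) := by
    induction hl with
    | refl => exact Relation.ReflTransGen.refl
    | tail _ h ih => exact ih.tail (Rot.left r h)
  have h2 : tamariLE (node l' r) (node l' r') := by
    induction hr with
    | refl => exact Relation.ReflTransGen.refl
    | tail _ h ih => exact ih.tail (Rot.right l' h)
  exact h1.trans h2

end Tree0

namespace Tree0

lemma rv_inj : ∀ (T T' : Tree0) (k : ℕ), T.size = T'.size →
    (∀ a, k < a → a ≤ k + T.size → Rv T k a = Rv T' k a) → T = T' := by
  intro T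
  induction T with
  | leaf =>
    intro T' k hs _
    cases T' with
    | leaf => rfl
    | node l' r' => simp [size] at hs
  | node l r ihl ihr =>
    intro T' k hs h
    cases T' with
    | leaf => simp [size] at hs
    | node l' r' =>
      simp only [size] at hs
      have hls : l.size = l'.size := by
        by_contra hne
        rcases lt_or_gt_of_ne hne with hlt | hlt
        · -- ρ := k + l.size + 1 < ρ'
          have h1 := h (k + l.size + 1) (by omega) (by simp [size])
          rw [rv_node_eq rfl, rv_node_lt (show k + l.size + 1 < k + l'.size + 1 by omega)] at h1
          have h2 := rv_bound l' k (k + l.size + 1) (by omega) (by omega)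
          simp [size] at *
          omega
        · have h1 := h (k + l'.size + 1) (by omega) (by simp [size]; omega)
          rw [rv_node_lt (show k + l'.size + 1 < k + l.size + 1 by omega),
            rv_node_eq rfl] at h1
          have h2 := rv_bound l k (k + l'.size + 1) (by omega) (by omega)
          simp [size] at *
          omega
      have hrs : r.size = r'.size := by omega
      have hl : l = l' := by
        apply ihl l' k hls
        intro a ha1 ha2
        have := h a ha1 (by simp [size]; omega)
        rwa [rv_node_lt (by omega), rv_node_lt (by omega)] at this
      have hr : r = r' := by
        apply ihr r' (k + l.size + 1) hrs
        intro a ha1 ha2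
        have := h a (by omega) (by simp [size]; omega)
        rwa [rv_node_gt (by omega), rv_node_gt (by omega), ← hls] at this
      rw [hl, hr]

lemma exists_rot : ∀ (T : Tree0) (k d : ℕ), k < d → d ≤ k + T.size → 0 < Lv T k d →
    ∃ T' x, Rot T T' ∧ T'.size = T.size ∧ k < x ∧ x < d ∧
      x + Rv T k x + 1 = d ∧
      Lv T k x + d = x + Lv T k d ∧
      (∀ j, j ≠ x → Rv T' k j = Rv T k j) ∧
      x + Rv T' k x = d + Rv T k d := by
  intro T
  induction T with
  | leaf => intro k d h1 h2; simp [size] at h2; omega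
  | node l r ihl ihr =>
    intro k d hd1 hd2 hL
    have hsz : (node l r).size = l.size + r.size + 1 := rfl
    rcases lt_trichotomy d (k + l.size + 1) with h | h | h
    · -- recurse left
      rw [lv_node_lt h] at hL
      obtain ⟨lr2, x, hrot, hsize, hx1, hx2, hrx, hlx, hoth, hnew⟩ :=
        ihl k d hd1 (by omega) hL
      refine ⟨node lr2 r, x, Rot.left r hrot, ?_, hx1, hx2, ?_, ?_, ?_, ?_⟩
      · simp [size, hsize]
      · rw [rv_node_lt (by omega)]; exact hrx
      · rw [lv_node_lt (by omega), lv_node_lt h]; exact hlx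
      · intro j hj
        rcases lt_trichotomy j (k + l.size + 1) with h' | h' | h'
        · rw [rv_node_lt (by rw [hsize]; omega), rv_node_lt h']; exact hoth j hj
        · rw [rv_node_eq (by rw [hsize]; omega), rv_node_eq h']
        · rw [rv_node_gt (by rw [hsize]; omega), rv_node_gt h', hsize]
      · rw [rv_node_lt (by rw [hsize]; omega), rv_node_lt (by omega)]
        exact hnew
    · -- rotate here; left subtree of d is l, nonempty
      rw [lv_node_eq h] at hL
      cases l with
      | leaf => simp [size] at hL
      | node A B =>
        have hsl : (node A B).size = A.size + B.size + 1 := rfl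
        refine ⟨node A (node B r), k + A.size + 1, Rot.root A B r, by simp [size]; omega,
          by omega, by rw [hsl] at h; omega, ?_, ?_, ?_, ?_⟩
        · rw [rv_node_lt (by rw [hsl]; omega), rv_node_eq rfl]
          rw [hsl] at h
          omega
        · rw [lv_node_lt (by rw [hsl]; omega), lv_node_eq rfl, lv_node_eq h]
          rw [hsl] at h ⊢
          omega
        · intro j hj
          rcases lt_trichotomy j (k + A.size + 1) with h' | h' | h'
          · rw [rv_node_lt h', rv_node_lt (by rw [hsl]; omega), rv_node_lt h']
          · exact absurd h' hj
          · rcases lt_trichotomy j (k + A.size + 1 + B.size + 1) with h'' | h'' | h''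
            · rw [rv_node_gt h', rv_node_lt (by omega),
                rv_node_lt (by rw [hsl]; omega), rv_node_gt h']
            · rw [rv_node_gt h', rv_node_eq (by omega), rv_node_eq (by rw [hsl]; omega)]
            · rw [rv_node_gt h', rv_node_gt (by omega), rv_node_gt (by rw [hsl]; omega),
                show k + (node A B).size + 1 = k + A.size + 1 + B.size + 1 by rw [hsl]; omega]
        · rw [rv_node_eq rfl, rv_node_eq h]
          rw [hsl] at h
          simp only [size]
          omega
    · -- recurse right
      rw [lv_node_gt h] at hL
      obtain ⟨rr2, x, hrot, hsize, hx1, hx2, hrx, hlx, hoth, hnew⟩ :=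
        ihr (k + l.size + 1) d (by omega) (by rw [hsz] at hd2; omega) hL
      refine ⟨node l rr2, x, Rot.right l hrot, ?_, by omega, hx2, ?_, ?_, ?_, ?_⟩
      · simp [size, hsize]
      · rw [rv_node_gt hx1]; exact hrx
      · rw [lv_node_gt hx1, lv_node_gt h]; exact hlx
      · intro j hj
        rcases lt_trichotomy j (k + l.size + 1) with h' | h' | h'
        · rw [rv_node_lt h', rv_node_lt h']
        · rw [rv_node_eq h', rv_node_eq h', hsize]
        · rw [rv_node_gt h', rv_node_gt h']; exact hoth j hj
      · rw [rv_node_gt hx1, rv_node_gt h]; exact hnew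

lemma tamari_of_rv_le_aux : ∀ (N : ℕ) (T T' : Tree0) (k : ℕ), T.size = T'.size →
    (∀ a, k < a → a ≤ k + T.size → Rv T k a ≤ Rv T' k a) →
    (∑ a ∈ Finset.Ioc k (k + T.size), (Rv T' k a - Rv T k a)) ≤ N → tamariLE T T' := by
  intro N
  induction N with
  | zero =>
    intro T T' k hs h hsum
    have heq : ∀ a, k < a → a ≤ k + T.size → Rv T k a = Rv T' k a := by
      intro a h1 h2
      have := Finset.sum_eq_zero_iff.mp (Nat.le_zero.mp hsum) a (by
        simp [Finset.mem_Ioc]; omega)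
      have := h a h1 h2
      omega
    rw [rv_inj T T' k hs heq]
    exact Relation.ReflTransGen.refl
  | succ N ih =>
    intro T T' k hs h hsum
    by_cases hviol : ∃ a, k < a ∧ a ≤ k + T.size ∧ Rv T k a < Rv T' k a
    · obtain ⟨a, ha1, ha2, ha3⟩ := hviol
      obtain ⟨d, hd⟩ : ∃ d, d = a + Rv T k a + 1 := ⟨_, rfl⟩
      have hdub : d ≤ k + T.size := by
        have := rv_bound T' k a ha1 (by omega)
        omega
      have hLd : 0 < Lv T k d := by
        rw [hd]
        have := lv_boundary T k a ha1 (by omega)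
        omega
      obtain ⟨Tp, x, hrot, hsize, hx1, hx2, hrx, hlx, hoth, hnew⟩ :=
        exists_rot T k d (by omega) hdub hLd
      have hxub : x ≤ k + T.size := by omega
      -- x is a violator
      have hxviol : Rv T k x < Rv T' k x := by
        rcases lt_trichotomy x a with hxa | hxa | hxa
        · by_contra hcon
          have hxe : Rv T' k x = Rv T k x := le_antisymm (by omega) (h x hx1 hxub)
          have hnest := rv_nested T' k x a hx1 (by omega) hxa (by omega)
          omega
        · rw [hxa]; exact ha3
        · exfalso
          have hbd : Rv T k a < Lv T k d := by
            rw [hd]; exact lv_boundary T k a ha1 (by omega)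
          have : x ≤ a + Lv T k x := by omega
          have := rv_lt_of_left T k a x ha1 hxa hxub this
          omega
      have hnest' := rv_nested T' k x d hx1 (by omega) hx2 (by omega)
      have hxle : Rv Tp k x ≤ Rv T' k x := by
        have := h d (by omega) hdub
        omega
      have hle' : ∀ j, k < j → j ≤ k + Tp.size → Rv Tp k j ≤ Rv T' k j := by
        intro j h1 h2
        rw [hsize] at h2
        by_cases hj : j = x
        · rw [hj]; exact hxle
        · rw [hoth j hj]; exact h j h1 h2
      have hsum' : (∑ a ∈ Finset.Ioc k (k + Tp.size), (Rv T' k a - Rv Tp k a)) ≤ N := by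
        have hlt : (∑ j ∈ Finset.Ioc k (k + T.size), (Rv T' k j - Rv Tp k j)) <
            (∑ j ∈ Finset.Ioc k (k + T.size), (Rv T' k j - Rv T k j)) := by
          apply Finset.sum_lt_sum
          · intro j hj
            by_cases hjx : j = x
            · subst hjx
              have : Rv T k j < Rv Tp k j := by omega
              omega
            · rw [hoth j hjx]
          · refine ⟨x, by simp [Finset.mem_Ioc]; omega, ?_⟩
            have : Rv T k x < Rv Tp k x := by omega
            omega
        rw [hsize]
        omega
      exact Relation.ReflTransGen.head hrot
        (ih Tp T' k (by rw [hsize]; exact hs) hle' hsum')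
    · push_neg at hviol
      have heq : ∀ a, k < a → a ≤ k + T.size → Rv T k a = Rv T' k a := fun a h1 h2 =>
        le_antisymm (h a h1 h2) (hviol a h1 h2)
      rw [rv_inj T T' k hs heq]
      exact Relation.ReflTransGen.refl

lemma tamari_of_rv_le (T T' : Tree0) (k : ℕ) (hs : T.size = T'.size)
    (h : ∀ a, k < a → a ≤ k + T.size → Rv T k a ≤ Rv T' k a) : tamariLE T T' :=
  tamari_of_rv_le_aux _ T T' k hs h le_rfl

lemma exists_tree_of_rv (v : ℕ → ℕ) : ∀ (m k : ℕ),
    (∀ a, k < a → a ≤ k + m → a + v a ≤ k + m) →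
    (∀ x d, k < x → x ≤ k + m → x < d → d ≤ x + v x → d + v d ≤ x + v x) →
    ∃ T : Tree0, T.size = m ∧ ∀ a, k < a → a ≤ k + m → Rv T k a = v a := by
  intro m
  induction m using Nat.strong_induction_on with
  | _ m ih =>
    intro k hb hn
    rcases Nat.eq_zero_or_pos m with hm | hm
    · subst hm
      exact ⟨leaf, rfl, fun a h1 h2 => by omega⟩
    · have hP : ∃ a, k < a ∧ a ≤ k + m ∧ a + v a = k + m := by
        refine ⟨k + m, by omega, le_rfl, ?_⟩
        have := hb (k + m) (by omega) le_rfl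
        omega
      classical
      obtain ⟨ρ, hρ1, hρ2, hρ3, hmin⟩ : ∃ ρ, k < ρ ∧ ρ ≤ k + m ∧ ρ + v ρ = k + m ∧
          ∀ b, b < ρ → ¬(k < b ∧ b ≤ k + m ∧ b + v b = k + m) :=
        ⟨Nat.find hP, (Nat.find_spec hP).1, (Nat.find_spec hP).2.1, (Nat.find_spec hP).2.2,
          fun b hb' => Nat.find_min hP hb'⟩
      -- left part
      have hbl : ∀ a, k < a → a ≤ k + (ρ - 1 - k) → a + v a ≤ k + (ρ - 1 - k) := by
        intro a h1 h2
        have h2' : a < ρ := by omega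
        by_contra hcon
        have hge : ρ ≤ a + v a := by omega
        have := hn a ρ h1 (by omega) (by omega) hge
        have := hb a h1 (by omega)
        exact hmin a h2' ⟨h1, by omega, by omega⟩
      obtain ⟨Tl, hTl1, hTl2⟩ := ih (ρ - 1 - k) (by omega) k hbl
        (fun x d h1 h2 h3 h4 => hn x d h1 (by omega) h3 h4)
      obtain ⟨Tr, hTr1, hTr2⟩ := ih (k + m - ρ) (by omega) ρ
        (fun a h1 h2 => by have := hb a (by omega) (by omega); omega)
        (fun x d h1 h2 h3 h4 => hn x d (by omega) (by omega) h3 h4)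
      refine ⟨node Tl Tr, by simp [size]; omega, ?_⟩
      intro a h1 h2
      have hroot : k + Tl.size + 1 = ρ := by omega
      rcases lt_trichotomy a ρ with h' | h' | h'
      · rw [rv_node_lt (by omega)]
        exact hTl2 a h1 (by omega)
      · rw [rv_node_eq (by omega), h']
        omega
      · rw [rv_node_gt (by omega), hroot]
        exact hTr2 a h' (by omega)

lemma exists_tree_of_lv (v : ℕ → ℕ) : ∀ (m k : ℕ),
    (∀ a, k < a → a ≤ k + m → k + v a < a) →
    (∀ d x, k < d → d ≤ k + m → x < d → d ≤ x + v d → k < x → d + v x ≤ x + v d) →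
    ∃ T : Tree0, T.size = m ∧ ∀ a, k < a → a ≤ k + m → Lv T k a = v a := by
  intro m
  induction m using Nat.strong_induction_on with
  | _ m ih =>
    intro k hb hn
    rcases Nat.eq_zero_or_pos m with hm | hm
    · subst hm
      exact ⟨leaf, rfl, fun a h1 h2 => by omega⟩
    · classical
      have hPk1 : k < k + 1 ∧ k + 1 ≤ k + m ∧ k + 1 = k + 1 + v (k + 1) := by
        refine ⟨by omega, by omega, ?_⟩
        have := hb (k + 1) (by omega) (by omega)
        omega
      have hspec : k < Nat.findGreatest (fun a => k < a ∧ a ≤ k + m ∧ a = k + 1 + v a) (k + m) ∧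
          Nat.findGreatest (fun a => k < a ∧ a ≤ k + m ∧ a = k + 1 + v a) (k + m) ≤ k + m ∧
          Nat.findGreatest (fun a => k < a ∧ a ≤ k + m ∧ a = k + 1 + v a) (k + m) =
            k + 1 + v (Nat.findGreatest (fun a => k < a ∧ a ≤ k + m ∧ a = k + 1 + v a) (k + m)) :=
        Nat.findGreatest_spec (P := fun a => k < a ∧ a ≤ k + m ∧ a = k + 1 + v a)
          (show k + 1 ≤ k + m by omega) hPk1
      obtain ⟨ρ, hρ1, hρ2, hρ3, hmax⟩ : ∃ ρ, k < ρ ∧ ρ ≤ k + m ∧ ρ = k + 1 + v ρ ∧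
          ∀ b, ρ < b → b ≤ k + m → ¬(k < b ∧ b ≤ k + m ∧ b = k + 1 + v b) :=
        ⟨Nat.findGreatest (fun a => k < a ∧ a ≤ k + m ∧ a = k + 1 + v a) (k + m),
          hspec.1, hspec.2.1, hspec.2.2,
          fun b h1 h2 => Nat.findGreatest_is_greatest h1 h2⟩
      -- every node above ρ has its left interval above ρ
      have habove : ∀ a, ρ < a → a ≤ k + m → ρ + v a < a := by
        intro a h1 h2
        by_contra hcon
        have h4 : a ≤ ρ + v a := by omega
        have := hn a ρ (by omega) h2 (by omega) h4 (by omega)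
        have := hb a (by omega) h2
        exact hmax a h1 h2 ⟨by omega, h2, by omega⟩
      obtain ⟨Tl, hTl1, hTl2⟩ := ih (ρ - 1 - k) (by omega) k
        (fun a h1 h2 => hb a h1 (by omega))
        (fun d x h1 h2 h3 h4 h5 => hn d x h1 (by omega) h3 h4 h5)
      obtain ⟨Tr, hTr1, hTr2⟩ := ih (k + m - ρ) (by omega) ρ
        (fun a h1 h2 => habove a h1 (by omega))
        (fun d x h1 h2 h3 h4 h5 => hn d x (by omega) (by omega) h3 h4 (by omega))
      refine ⟨node Tl Tr, by simp [size]; omega, ?_⟩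
      intro a h1 h2
      have hroot : k + Tl.size + 1 = ρ := by omega
      rcases lt_trichotomy a ρ with h' | h' | h'
      · rw [lv_node_lt (by omega)]
        exact hTl2 a h1 (by omega)
      · rw [lv_node_eq (by omega), h']
        omega
      · rw [lv_node_gt (by omega), hroot]
        exact hTr2 a h' (by omega)

end Tree0

namespace BT

lemma size_shape_bstInsert (k : ℕ) : ∀ (B : BT),
    (shape (bstInsert k B)).size = (shape B).size + 1 := by
  intro B
  induction B with
  | leaf => simp [bstInsert, shape, Tree0.size]
  | node l x r ihl ihr =>
    by_cases h : k ≤ x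
    · simp [bstInsert, h, shape, Tree0.size, ihl]; omega
    · simp [bstInsert, h, shape, Tree0.size, ihr]; omega

lemma size_shape_abr (w : List ℕ) : (shape (abr w)).size = w.length := by
  induction w with
  | nil => simp [abr, shape, Tree0.size]
  | cons c t ih =>
    show (shape (bstInsert c (abr t))).size = t.length + 1
    rw [size_shape_bstInsert, ih]

lemma foldr_insert_node (x : ℕ) : ∀ (w : List ℕ) (l r : BT),
    List.foldr bstInsert (node l x r) w =
      node (List.foldr bstInsert l (w.filter (· ≤ x))) x
        (List.foldr bstInsert r (w.filter (fun j => ¬ j ≤ x))) := by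
  intro w
  induction w with
  | nil => intro l r; simp
  | cons c t ih =>
    intro l r
    by_cases h : c ≤ x
    · simp only [List.foldr_cons, ih, List.filter_cons]
      rw [if_pos (by simp [h]), if_neg (by simp [h])]
      simp [bstInsert, h]
    · simp only [List.foldr_cons, ih, List.filter_cons]
      rw [if_neg (by simp [h]), if_pos (by simp [h])]
      simp [bstInsert, h]

lemma abr_concat (w : List ℕ) (x : ℕ) :
    abr (w ++ [x]) = node (abr (w.filter (· ≤ x))) x (abr (w.filter (fun j => ¬ j ≤ x))) := by
  show List.foldr bstInsert leaf (w ++ [x]) = _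
  rw [List.foldr_append]
  show List.foldr bstInsert (node leaf x leaf) w = _
  exact foldr_insert_node x w leaf leaf

end BT

/-- `b` occurs strictly before `a` in `w`. -/
def Bf (w : List ℕ) (b a : ℕ) : Prop := w.idxOf b < w.idxOf a

lemma bf_asymm {w : List ℕ} {b a : ℕ} (h1 : Bf w b a) (h2 : Bf w a b) : False := by
  unfold Bf at *; omega

lemma indexOf_append_left {w : List ℕ} {b : ℕ} (t : List ℕ) (hb : b ∈ w) :
    (w ++ t).idxOf b = w.idxOf b := by
  induction w with
  | nil => cases hb
  | cons c u ih =>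
    by_cases h : c = b
    · subst h; simp [List.idxOf_cons_self]
    · rcases hb with _ | hb
      · exact absurd rfl h
      · rename_i hb
        rw [List.cons_append, List.idxOf_cons_ne _ h, List.idxOf_cons_ne _ h, ih hb]

lemma indexOf_concat_self {w : List ℕ} {x : ℕ} (hx : x ∉ w) :
    (w ++ [x]).idxOf x = w.length := by
  induction w with
  | nil => simp
  | cons c u ih =>
    have hcx : c ≠ x := fun h => hx (h ▸ (List.mem_cons_self : c ∈ c :: u))
    rw [List.cons_append, List.idxOf_cons_ne _ hcx, ih (fun h => hx (List.mem_cons_of_mem _ h))]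
    simp

lemma bf_append {w : List ℕ} {x b a : ℕ} (hb : b ∈ w) (ha : a ∈ w) :
    Bf (w ++ [x]) b a ↔ Bf w b a := by
  unfold Bf
  rw [indexOf_append_left _ hb, indexOf_append_left _ ha]

lemma bf_last {w : List ℕ} {x b : ℕ} (hb : b ∈ w) (hx : x ∉ w) : Bf (w ++ [x]) b x := by
  unfold Bf
  rw [indexOf_append_left _ hb, indexOf_concat_self hx]
  exact List.idxOf_lt_length_iff.mpr hb

lemma bf_filter (p : ℕ → Bool) : ∀ (w : List ℕ), w.Nodup → ∀ b a, b ∈ w → a ∈ w →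
    p b → p a → (Bf (w.filter p) b a ↔ Bf w b a) := by
  intro w
  induction w with
  | nil => intro _ b a hb; cases hb
  | cons c t ih =>
    intro hnd b a hb ha hpb hpa
    obtain ⟨hc, hndt⟩ := List.nodup_cons.mp hnd
    by_cases hab : a = b
    · subst hab; unfold Bf; omega
    by_cases hcb : c = b
    · subst hcb
      have hat : a ∈ t := by
        rcases ha with _ | ha
        · exact absurd rfl (by exact fun h => hab h.symm)
        · assumption
      unfold Bf
      rw [List.filter_cons, if_pos (by simp [hpb]), List.idxOf_cons_self,
        List.idxOf_cons_self,
        List.idxOf_cons_ne _ (show c ≠ a from fun h => hab h.symm),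
        List.idxOf_cons_ne _ (show c ≠ a from fun h => hab h.symm)]
      simp
    · have hbt : b ∈ t := by
        rcases hb with _ | hb
        · exact absurd rfl hcb
        · assumption
      by_cases hca : c = a
      · subst hca
        unfold Bf
        rw [List.filter_cons, if_pos (by simp [hpa]), List.idxOf_cons_self,
          List.idxOf_cons_self, List.idxOf_cons_ne _ hcb, List.idxOf_cons_ne _ hcb]
        simp
      · have hat : a ∈ t := by
          rcases ha with _ | ha
          · exact absurd rfl hca
          · assumption
        have hbne : b ≠ c := fun h => hcb h.symm
        have hane : a ≠ c := fun h => hca h.symm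
        by_cases hpc : p c
        · unfold Bf
          rw [List.filter_cons, if_pos (by simp [hpc]),
            List.idxOf_cons_ne _ hcb, List.idxOf_cons_ne _ hca,
            List.idxOf_cons_ne _ hcb, List.idxOf_cons_ne _ hca]
          have := ih hndt b a hbt hat hpb hpa
          unfold Bf at this
          omega
        · unfold Bf
          rw [List.filter_cons, if_neg (by simp [hpc]),
            List.idxOf_cons_ne _ hcb, List.idxOf_cons_ne _ hca]
          have := ih hndt b a hbt hat hpb hpa
          unfold Bf at this
          omega

/-- Splitting a permutation of an interval at `x`. -/
lemma filter_perm_split {k m x : ℕ} {w : List ℕ}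
    (h : (w ++ [x]).Perm (List.range' (k+1) m)) (hx1 : k < x) (hx2 : x ≤ k + m) :
    (w.filter (fun j => j ≤ x)).Perm (List.range' (k+1) (x - k - 1)) ∧
    (w.filter (fun j => ¬ j ≤ x)).Perm (List.range' (x+1) (k + m - x)) := by
  have hsplit : List.range' (k+1) m =
      List.range' (k+1) (x - k - 1) ++ x :: List.range' (x+1) (k + m - x) := by
    have h1 : List.range' (k+1) (x-k-1) ++ List.range' (k+1+(x-k-1)) (m-(x-k-1)) =
        List.range' (k+1) m := by
      have h0 := List.range'_append (s := k+1) (m := x-k-1) (n := m-(x-k-1)) (step := 1)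
      simp only [one_mul, mul_one] at h0
      rw [h0]
      congr 1
      omega
    rw [← h1]
    congr 1
    rw [show k+1+(x-k-1) = x by omega, show m - (x-k-1) = (k+m-x) + 1 by omega,
      List.range'_succ]
  have hxw : x ∉ List.range' (k+1) (x - k - 1) := by
    intro hmem
    rw [List.mem_range'_1] at hmem
    omega
  have hperm : w.Perm ((List.range' (k+1) m).erase x) := by
    have h2 : (x :: w).Perm (List.range' (k+1) m) :=
      ((List.perm_append_singleton x w).symm.trans h)
    exact (List.cons_perm_iff_perm_erase.mp h2).2
  have herase : (List.range' (k+1) m).erase x =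
      List.range' (k+1) (x - k - 1) ++ List.range' (x+1) (k + m - x) := by
    rw [hsplit, List.erase_append_right _ hxw, List.erase_cons_head]
  rw [herase] at hperm
  constructor
  · refine (hperm.filter _).trans ?_
    rw [List.filter_append]
    have hA : (List.range' (k+1) (x-k-1)).filter (fun j => j ≤ x) =
        List.range' (k+1) (x-k-1) := by
      rw [List.filter_eq_self]
      intro a ha
      rw [List.mem_range'_1] at ha
      simp; omega
    have hB : (List.range' (x+1) (k+m-x)).filter (fun j => j ≤ x) = [] := by
      rw [List.filter_eq_nil_iff]
      intro a ha
      rw [List.mem_range'_1] at ha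
      simp; omega
    rw [hA, hB, List.append_nil]
  · refine (hperm.filter _).trans ?_
    rw [List.filter_append]
    have hA : (List.range' (k+1) (x-k-1)).filter (fun j => ¬ j ≤ x) = [] := by
      rw [List.filter_eq_nil_iff]
      intro a ha
      rw [List.mem_range'_1] at ha
      simp; omega
    have hB : (List.range' (x+1) (k+m-x)).filter (fun j => ¬ j ≤ x) =
        List.range' (x+1) (k+m-x) := by
      rw [List.filter_eq_self]
      intro a ha
      rw [List.mem_range'_1] at ha
      simp; omega
    rw [hA, hB, List.nil_append]

lemma mem_of_perm_range {k m j : ℕ} {w : List ℕ} (h : w.Perm (List.range' (k+1) m)) :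
    j ∈ w ↔ (k < j ∧ j ≤ k + m) := by
  rw [h.mem_iff, List.mem_range'_1]; omega

lemma split_setup {k m x : ℕ} {w' : List ℕ}
    (h : (w' ++ [x]).Perm (List.range' (k+1) m)) :
    k < x ∧ x ≤ k + m ∧ x ∉ w' ∧ w'.Nodup ∧
    (w'.filter (fun j => j ≤ x)).Perm (List.range' (k+1) (x - k - 1)) ∧
    (w'.filter (fun j => ¬ j ≤ x)).Perm (List.range' (x+1) (k + m - x)) ∧
    BT.shape (BT.abr (w' ++ [x])) =
      Tree0.node (BT.shape (BT.abr (w'.filter (fun j => j ≤ x))))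
        (BT.shape (BT.abr (w'.filter (fun j => ¬ j ≤ x)))) ∧
    (BT.shape (BT.abr (w'.filter (fun j => j ≤ x)))).size = x - k - 1 ∧
    (BT.shape (BT.abr (w'.filter (fun j => ¬ j ≤ x)))).size = k + m - x := by
  have hxw : x ∈ w' ++ [x] := by simp
  have hx := (mem_of_perm_range h).mp hxw
  have hnd : (w' ++ [x]).Nodup := h.nodup_iff.mpr (List.nodup_range' 1)
  have hnd2 : (x :: w').Nodup := (List.perm_append_singleton x w').nodup_iff.mp hnd
  obtain ⟨hxn, hndw⟩ := List.nodup_cons.mp hnd2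
  obtain ⟨hu, hv⟩ := filter_perm_split h hx.1 hx.2
  have habr := BT.abr_concat w' x
  have hshape : BT.shape (BT.abr (w' ++ [x])) =
      Tree0.node (BT.shape (BT.abr (w'.filter (fun j => j ≤ x))))
        (BT.shape (BT.abr (w'.filter (fun j => ¬ j ≤ x)))) := by
    rw [habr]; rfl
  refine ⟨hx.1, hx.2, hxn, hndw, hu, hv, hshape, ?_, ?_⟩
  · rw [BT.size_shape_abr, hu.length_eq, List.length_range']
  · rw [BT.size_shape_abr, hv.length_eq, List.length_range']

lemma own_R : ∀ (m k : ℕ) (w : List ℕ), w.Perm (List.range' (k+1) m) →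
    ∀ a j, k < a → a ≤ k + m → a < j → j ≤ a + Tree0.Rv (BT.shape (BT.abr w)) k a →
    Bf w j a := by
  intro m
  induction m using Nat.strong_induction_on with
  | _ m ih =>
  intro k w hp a j ha1 ha2 haj hj
  rcases List.eq_nil_or_concat w with rfl | ⟨w', x, rfl⟩
  · have := hp.length_eq; simp at this; omega
  rw [List.concat_eq_append] at hp hj ⊢
  obtain ⟨hx1, hx2, hxn, hndw, hu, hv, hshape, hsu, hsv⟩ := split_setup hp
  rcases lt_trichotomy a x with hax | hax | hax
  · -- a in left part
    have hrv : Tree0.Rv (BT.shape (BT.abr (w' ++ [x]))) k a =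
        Tree0.Rv (BT.shape (BT.abr (w'.filter (fun j => j ≤ x)))) k a := by
      rw [hshape]; exact Tree0.rv_node_lt (by omega)
    rw [hrv] at hj
    have hbound := Tree0.rv_bound _ k a ha1 (by omega : a ≤ k + (BT.shape (BT.abr (w'.filter (fun j => j ≤ x)))).size)
    have hju : Bf (w'.filter (fun j => j ≤ x)) j a :=
      ih (x - k - 1) (by omega) k _ hu a j ha1 (by omega) haj hj
    have hjw' : j ∈ w' := by
      have : j ∈ w' ++ [x] := (mem_of_perm_range hp).mpr (by omega)
      rcases List.mem_append.mp this with h' | h'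
      · exact h'
      · simp at h'; omega
    have haw' : a ∈ w' := by
      have : a ∈ w' ++ [x] := (mem_of_perm_range hp).mpr (by omega)
      rcases List.mem_append.mp this with h' | h'
      · exact h'
      · simp at h'; omega
    have hbw' : Bf w' j a := (bf_filter _ w' hndw j a hjw' haw'
      (by simp; omega) (by simp; omega)).mp hju
    exact (bf_append hjw' haw').mpr hbw'
  · -- a is the root x
    have hrv : Tree0.Rv (BT.shape (BT.abr (w' ++ [x]))) k a =
        (BT.shape (BT.abr (w'.filter (fun j => ¬ j ≤ x)))).size := by
      rw [hshape]; exact Tree0.rv_node_eq (by omega)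
    rw [hrv, hsv] at hj
    have hjw' : j ∈ w' := by
      have : j ∈ w' ++ [x] := (mem_of_perm_range hp).mpr (by omega)
      rcases List.mem_append.mp this with h' | h'
      · exact h'
      · simp at h'; omega
    rw [hax]
    exact bf_last hjw' hxn
  · -- a in right part
    have hrv : Tree0.Rv (BT.shape (BT.abr (w' ++ [x]))) k a =
        Tree0.Rv (BT.shape (BT.abr (w'.filter (fun j => ¬ j ≤ x)))) x a := by
      rw [hshape, Tree0.rv_node_gt (by omega), show k + (BT.shape (BT.abr (w'.filter (fun j => j ≤ x)))).size + 1 = x by omega]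
    rw [hrv] at hj
    have hbound := Tree0.rv_bound _ x a hax (by omega : a ≤ x + (BT.shape (BT.abr (w'.filter (fun j => ¬ j ≤ x)))).size)
    have hju : Bf (w'.filter (fun j => ¬ j ≤ x)) j a :=
      ih (k + m - x) (by omega) x _ hv a j hax (by omega) haj hj
    have hjw' : j ∈ w' := by
      have : j ∈ w' ++ [x] := (mem_of_perm_range hp).mpr (by omega)
      rcases List.mem_append.mp this with h' | h'
      · exact h'
      · simp at h'; omega
    have haw' : a ∈ w' := by
      have : a ∈ w' ++ [x] := (mem_of_perm_range hp).mpr (by omega)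
      rcases List.mem_append.mp this with h' | h'
      · exact h'
      · simp at h'; omega
    have hbw' : Bf w' j a := (bf_filter _ w' hndw j a hjw' haw'
      (by simp; omega) (by simp; omega)).mp hju
    exact (bf_append hjw' haw').mpr hbw'

lemma own_L : ∀ (m k : ℕ) (w : List ℕ), w.Perm (List.range' (k+1) m) →
    ∀ a j, k < a → a ≤ k + m → j < a → a ≤ j + Tree0.Lv (BT.shape (BT.abr w)) k a →
    Bf w j a := by
  intro m
  induction m using Nat.strong_induction_on with
  | _ m ih =>
  intro k w hp a j ha1 ha2 haj hj
  rcases List.eq_nil_or_concat w with rfl | ⟨w', x, rfl⟩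
  · have := hp.length_eq; simp at this; omega
  rw [List.concat_eq_append] at hp hj ⊢
  obtain ⟨hx1, hx2, hxn, hndw, hu, hv, hshape, hsu, hsv⟩ := split_setup hp
  rcases lt_trichotomy a x with hax | hax | hax
  · have hlv : Tree0.Lv (BT.shape (BT.abr (w' ++ [x]))) k a =
        Tree0.Lv (BT.shape (BT.abr (w'.filter (fun j => j ≤ x)))) k a := by
      rw [hshape]; exact Tree0.lv_node_lt (by omega)
    rw [hlv] at hj
    have hbound := Tree0.lv_bound _ k a ha1 (by omega : a ≤ k + (BT.shape (BT.abr (w'.filter (fun j => j ≤ x)))).size)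
    have hju : Bf (w'.filter (fun j => j ≤ x)) j a :=
      ih (x - k - 1) (by omega) k _ hu a j ha1 (by omega) haj hj
    have hjw' : j ∈ w' := by
      have : j ∈ w' ++ [x] := (mem_of_perm_range hp).mpr (by omega)
      rcases List.mem_append.mp this with h' | h'
      · exact h'
      · simp at h'; omega
    have haw' : a ∈ w' := by
      have : a ∈ w' ++ [x] := (mem_of_perm_range hp).mpr (by omega)
      rcases List.mem_append.mp this with h' | h'
      · exact h'
      · simp at h'; omega
    have hbw' : Bf w' j a := (bf_filter _ w' hndw j a hjw' haw'
      (by simp; omega) (by simp; omega)).mp hju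
    exact (bf_append hjw' haw').mpr hbw'
  · have hlv : Tree0.Lv (BT.shape (BT.abr (w' ++ [x]))) k a =
        (BT.shape (BT.abr (w'.filter (fun j => j ≤ x)))).size := by
      rw [hshape]; exact Tree0.lv_node_eq (by omega)
    rw [hlv, hsu] at hj
    have hjw' : j ∈ w' := by
      have : j ∈ w' ++ [x] := (mem_of_perm_range hp).mpr (by omega)
      rcases List.mem_append.mp this with h' | h'
      · exact h'
      · simp at h'; omega
    rw [hax]
    exact bf_last hjw' hxn
  · have hlv : Tree0.Lv (BT.shape (BT.abr (w' ++ [x]))) k a =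
        Tree0.Lv (BT.shape (BT.abr (w'.filter (fun j => ¬ j ≤ x)))) x a := by
      rw [hshape, Tree0.lv_node_gt (by omega), show k + (BT.shape (BT.abr (w'.filter (fun j => j ≤ x)))).size + 1 = x by omega]
    rw [hlv] at hj
    have hbound := Tree0.lv_bound _ x a hax (by omega : a ≤ x + (BT.shape (BT.abr (w'.filter (fun j => ¬ j ≤ x)))).size)
    have hju : Bf (w'.filter (fun j => ¬ j ≤ x)) j a :=
      ih (k + m - x) (by omega) x _ hv a j hax (by omega) haj hj
    have hjw' : j ∈ w' := by
      have : j ∈ w' ++ [x] := (mem_of_perm_range hp).mpr (by omega)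
      rcases List.mem_append.mp this with h' | h'
      · exact h'
      · simp at h'; omega
    have haw' : a ∈ w' := by
      have : a ∈ w' ++ [x] := (mem_of_perm_range hp).mpr (by omega)
      rcases List.mem_append.mp this with h' | h'
      · exact h'
      · simp at h'; omega
    have hbw' : Bf w' j a := (bf_filter _ w' hndw j a hjw' haw'
      (by simp; omega) (by simp; omega)).mp hju
    exact (bf_append hjw' haw').mpr hbw'

lemma rv_ge : ∀ (m k : ℕ) (w : List ℕ), w.Perm (List.range' (k+1) m) →
    ∀ a t, k < a → a ≤ k + m → a + t ≤ k + m →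
    (∀ j, a < j → j ≤ a + t → Bf w j a) →
    t ≤ Tree0.Rv (BT.shape (BT.abr w)) k a := by
  intro m
  induction m using Nat.strong_induction_on with
  | _ m ih =>
  intro k w hp a t ha1 ha2 hat hball
  rcases List.eq_nil_or_concat w with rfl | ⟨w', x, rfl⟩
  · have := hp.length_eq; simp at this; omega
  rw [List.concat_eq_append] at hp hball ⊢
  obtain ⟨hx1, hx2, hxn, hndw, hu, hv, hshape, hsu, hsv⟩ := split_setup hp
  have haw' : a ≠ x → a ∈ w' := by
    intro hne
    have : a ∈ w' ++ [x] := (mem_of_perm_range hp).mpr (by omega)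
    rcases List.mem_append.mp this with h' | h'
    · exact h'
    · simp at h'; exact absurd h' hne
  rcases lt_trichotomy a x with hax | hax | hax
  · -- a in left part; first, the interval cannot reach x
    have hint : a + t < x := by
      by_contra hcon
      have hbf := hball x hax (by omega)
      have hbf2 : Bf (w' ++ [x]) a x := bf_last (haw' (by omega)) hxn
      exact bf_asymm hbf hbf2
    have hrv : Tree0.Rv (BT.shape (BT.abr (w' ++ [x]))) k a =
        Tree0.Rv (BT.shape (BT.abr (w'.filter (fun j => j ≤ x)))) k a := by
      rw [hshape]; exact Tree0.rv_node_lt (by omega)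
    rw [hrv]
    apply ih (x - k - 1) (by omega) k _ hu a t ha1 (by omega) (by omega)
    intro j hj1 hj2
    have hjw' : j ∈ w' := by
      have : j ∈ w' ++ [x] := (mem_of_perm_range hp).mpr (by omega)
      rcases List.mem_append.mp this with h' | h'
      · exact h'
      · simp at h'; omega
    have hbw' : Bf w' j a := (bf_append hjw' (haw' (by omega))).mp (hball j hj1 hj2)
    exact (bf_filter _ w' hndw j a hjw' (haw' (by omega))
      (by simp; omega) (by simp; omega)).mpr hbw'
  · have hrv : Tree0.Rv (BT.shape (BT.abr (w' ++ [x]))) k a =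
        (BT.shape (BT.abr (w'.filter (fun j => ¬ j ≤ x)))).size := by
      rw [hshape]; exact Tree0.rv_node_eq (by omega)
    rw [hrv, hsv]
    omega
  · have hrv : Tree0.Rv (BT.shape (BT.abr (w' ++ [x]))) k a =
        Tree0.Rv (BT.shape (BT.abr (w'.filter (fun j => ¬ j ≤ x)))) x a := by
      rw [hshape, Tree0.rv_node_gt (by omega), show k + (BT.shape (BT.abr (w'.filter (fun j => j ≤ x)))).size + 1 = x by omega]
    rw [hrv]
    apply ih (k + m - x) (by omega) x _ hv a t hax (by omega) (by omega)
    intro j hj1 hj2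
    have hjw' : j ∈ w' := by
      have : j ∈ w' ++ [x] := (mem_of_perm_range hp).mpr (by omega)
      rcases List.mem_append.mp this with h' | h'
      · exact h'
      · simp at h'; omega
    have hbw' : Bf w' j a := (bf_append hjw' (haw' (by omega))).mp (hball j hj1 hj2)
    exact (bf_filter _ w' hndw j a hjw' (haw' (by omega))
      (by simp; omega) (by simp; omega)).mpr hbw'

lemma wordOf_nodup {n : ℕ} (σ : Equiv.Perm (Fin n)) : (wordOf σ).Nodup := by
  rw [wordOf, List.nodup_ofFn]
  intro i j h
  simp only [add_left_inj] at h
  exact σ.injective (Fin.val_injective h)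

lemma wordOf_perm {n : ℕ} (σ : Equiv.Perm (Fin n)) :
    (wordOf σ).Perm (List.range' 1 n) := by
  rw [List.perm_ext_iff_of_nodup (wordOf_nodup σ) (List.nodup_range' 1)]
  intro j
  rw [List.mem_range'_1, wordOf, List.mem_ofFn]
  constructor
  · rintro ⟨i, rfl⟩
    have := (σ i).isLt
    show 1 ≤ (σ i : ℕ) + 1 ∧ (σ i : ℕ) + 1 < 1 + n
    omega
  · rintro ⟨h1, h2⟩
    refine ⟨σ.symm ⟨j - 1, by omega⟩, ?_⟩
    show (σ (σ.symm ⟨j - 1, by omega⟩) : ℕ) + 1 = j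
    simp only [Equiv.apply_symm_apply]
    omega

lemma wordOf_length {n : ℕ} (σ : Equiv.Perm (Fin n)) : (wordOf σ).length = n := by
  simp [wordOf]

lemma indexOf_wordOf {n : ℕ} (σ : Equiv.Perm (Fin n)) (v : Fin n) :
    (wordOf σ).idxOf ((v : ℕ) + 1) = (σ⁻¹ v : ℕ) := by
  have hlt : (σ⁻¹ v : ℕ) < (wordOf σ).length := by
    rw [wordOf_length]; exact (σ⁻¹ v).isLt
  have hget : (wordOf σ)[(σ⁻¹ v : ℕ)]'hlt = (v : ℕ) + 1 := by
    have h0 := List.getElem_ofFn (f := fun i : Fin n => (σ i : ℕ) + 1) (i := (σ⁻¹ v : ℕ)) hlt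
    refine h0.trans ?_
    show (σ ⟨(σ⁻¹ v : ℕ), _⟩ : ℕ) + 1 = (v : ℕ) + 1
    have h1 : (⟨(σ⁻¹ v : ℕ), (σ⁻¹ v).isLt⟩ : Fin n) = σ⁻¹ v := by
      apply Fin.ext; rfl
    rw [h1]
    have h2 : σ (σ⁻¹ v) = v := by simp
    rw [h2]
  have h3 := List.Nodup.idxOf_getElem (wordOf_nodup σ) ((σ⁻¹ v : ℕ)) hlt
  rw [hget] at h3
  exact h3

lemma bf_wordOf {n : ℕ} (σ : Equiv.Perm (Fin n)) (b a : Fin n) :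
    Bf (wordOf σ) ((b : ℕ) + 1) ((a : ℕ) + 1) ↔ (σ⁻¹ b : ℕ) < (σ⁻¹ a : ℕ) := by
  unfold Bf
  rw [indexOf_wordOf, indexOf_wordOf]

lemma size_abrShape {n : ℕ} (σ : Equiv.Perm (Fin n)) : (abrShape σ).size = n := by
  rw [abrShape, BT.size_shape_abr, wordOf_length]

lemma wordOf_perm' {n : ℕ} (σ : Equiv.Perm (Fin n)) :
    (wordOf σ).Perm (List.range' (0 + 1) n) := by
  have := wordOf_perm σ
  simpa using this

/-- M1: `T ≤ shape σ` iff `σ` satisfies the decreasing condition of `T`. -/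
lemma M1 {n : ℕ} (T : Tree0) (hT : T.size = n) (σ : Equiv.Perm (Fin n)) :
    Tree0.tamariLE T (abrShape σ) ↔
    (∀ a j : ℕ, 0 < a → a ≤ n → a < j → j ≤ a + Tree0.Rv T 0 a → Bf (wordOf σ) j a) := by
  have hsize : (abrShape σ).size = n := size_abrShape σ
  constructor
  · intro h a j h1 h2 h3 h4
    apply own_R n 0 (wordOf σ) (wordOf_perm' σ) a j h1 (by omega) h3
    have := Tree0.rv_tamari h 0 a
    show j ≤ a + Tree0.Rv (abrShape σ) 0 a
    omega
  · intro h
    apply Tree0.tamari_of_rv_le T (abrShape σ) 0 (by omega)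
    intro a h1 h2
    rw [hT] at h2
    have hbd := Tree0.rv_bound T 0 a h1 (by omega)
    exact rv_ge n 0 (wordOf σ) (wordOf_perm' σ) a _ h1 (by omega) (by omega)
      (fun j hj1 hj2 => h a j h1 (by omega) hj1 hj2)

/-- M2: `shape σ ≤ T` iff `σ` satisfies the increasing condition of `T`. -/
lemma M2 {n : ℕ} (T : Tree0) (hT : T.size = n) (σ : Equiv.Perm (Fin n)) :
    Tree0.tamariLE (abrShape σ) T ↔
    (∀ a j : ℕ, 0 < a → a ≤ n → j < a → a ≤ j + Tree0.Lv T 0 a → Bf (wordOf σ) j a) := by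
  have hsize : (abrShape σ).size = n := size_abrShape σ
  constructor
  · intro h a j h1 h2 h3 h4
    apply own_L n 0 (wordOf σ) (wordOf_perm' σ) a j h1 (by omega) h3
    have := Tree0.lv_tamari h 0 a
    show a ≤ j + Tree0.Lv (abrShape σ) 0 a
    omega
  · intro h
    apply Tree0.tamari_of_rv_le (abrShape σ) T 0 (by omega)
    intro a h1 h2
    rw [hsize] at h2
    by_contra hc
    push_neg at hc
    have hbdS := Tree0.rv_bound (abrShape σ) 0 a h1 (by omega)
    have hbd := Tree0.lv_boundary T 0 a h1 (by rw [hT]; omega)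
    have h5 : Bf (wordOf σ) a (a + Tree0.Rv T 0 a + 1) :=
      h (a + Tree0.Rv T 0 a + 1) a (by omega) (by omega) (by omega) (by omega)
    have h6 : Bf (wordOf σ) (a + Tree0.Rv T 0 a + 1) a := by
      apply own_R n 0 (wordOf σ) (wordOf_perm' σ) a _ h1 (by omega) (by omega)
      show a + Tree0.Rv T 0 a + 1 ≤ a + Tree0.Rv (abrShape σ) 0 a
      omega
    exact bf_asymm h5 h6

lemma exists_perm_sorted {n : ℕ} (s : Fin n → Fin n → Prop) (hlin : IsLinearOrder (Fin n) s) :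
    ∃ σ : Equiv.Perm (Fin n), ∀ x y, s x y → x ≠ y → (σ⁻¹ x : ℕ) < (σ⁻¹ y : ℕ) := by
  classical
  haveI := hlin
  haveI : DecidableRel s := Classical.decRel s
  set l := Finset.sort Finset.univ s with hl
  have hlen : l.length = n := by rw [hl, Finset.length_sort]; simp
  have hnd : l.Nodup := Finset.sort_nodup _ s
  have hsorted : List.Pairwise s l := Finset.pairwise_sort _ s
  have hf : ∀ i : Fin n, (i : ℕ) < l.length := fun i => by rw [hlen]; exact i.isLt
  have hinj : Function.Injective (fun i : Fin n => l[(i : ℕ)]'(hf i)) := by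
    intro i j hij
    simp only at hij
    exact Fin.ext ((List.Nodup.getElem_inj_iff hnd).mp hij)
  have hbij := Finite.injective_iff_bijective.mp hinj
  refine ⟨Equiv.ofBijective _ hbij, ?_⟩
  intro x y hs hne
  set σ : Equiv.Perm (Fin n) := Equiv.ofBijective _ hbij with hσ
  have happ : ∀ z : Fin n, l[((σ⁻¹ z : Fin n) : ℕ)]'(hf _) = z := by
    intro z
    have := Equiv.apply_symm_apply σ z
    exact this
  by_contra hcon
  push_neg at hcon
  rcases eq_or_lt_of_le hcon with heq | hlt
  · -- equal positions ⇒ x = y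
    have h1 := happ x
    have h2 := happ y
    apply hne
    rw [← h1, ← h2]
    congr 1
    omega
  · -- y's position strictly before x's: sorted gives s y x
    have h3 : s (l.get ⟨((σ⁻¹ y : Fin n) : ℕ), hf _⟩) (l.get ⟨((σ⁻¹ x : Fin n) : ℕ), hf _⟩) :=
      List.Pairwise.rel_get_of_lt hsorted (by exact hlt)
    simp only [List.get_eq_getElem] at h3
    rw [happ x, happ y] at h3
    exact hne (hlin.toIsPartialOrder.toAntisymm.antisymm x y hs h3)

lemma isLinExt_of_extends {n : ℕ} (r s : Fin n → Fin n → Prop)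
    (hsub : ∀ a b, r a b → s a b) (hlin : IsLinearOrder (Fin n) s) :
    ∃ σ : Equiv.Perm (Fin n), IsLinExtOf r σ ∧
      ∀ x y, s x y → x ≠ y → (σ⁻¹ x : ℕ) < (σ⁻¹ y : ℕ) := by
  obtain ⟨σ, hσ⟩ := exists_perm_sorted s hlin
  refine ⟨σ, ?_, hσ⟩
  intro a b hab
  by_cases h : a = b
  · rw [h]
  · have := hσ a b (hsub a b hab) h
    rw [Fin.le_def]
    omega

lemma exists_linext {n : ℕ} (r : Fin n → Fin n → Prop)
    (hrefl : ∀ a, r a a) (hantisymm : ∀ a b, r a b → r b a → a = b)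
    (htrans : ∀ a b c, r a b → r b c → r a c) :
    ∃ σ : Equiv.Perm (Fin n), IsLinExtOf r σ := by
  haveI : IsPartialOrder (Fin n) r :=
    { refl := hrefl, trans := htrans, antisymm := hantisymm }
  obtain ⟨s, hslin, hsub⟩ := extend_partialOrder r
  haveI := hslin
  obtain ⟨σ, hσ, _⟩ := isLinExt_of_extends r s (fun a b h => hsub a b h) hslin
  exact ⟨σ, hσ⟩

/-- Szpilrajn-type separation: if `¬ r j t` then some linear extension puts `t` before `j`. -/
lemma exists_linext_sep {n : ℕ} (r : Fin n → Fin n → Prop)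
    (hrefl : ∀ a, r a a) (hantisymm : ∀ a b, r a b → r b a → a = b)
    (htrans : ∀ a b c, r a b → r b c → r a c) {j t : Fin n} (hjt : ¬ r j t) :
    ∃ σ : Equiv.Perm (Fin n), IsLinExtOf r σ ∧ (σ⁻¹ t : ℕ) < (σ⁻¹ j : ℕ) := by
  have hne : j ≠ t := fun h => hjt (h ▸ hrefl j)
  set r2 : Fin n → Fin n → Prop := fun x y => r x y ∨ (r x t ∧ r j y) with hr2
  haveI : IsPartialOrder (Fin n) r2 :=
    { refl := fun a => Or.inl (hrefl a)
      trans := by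
        rintro x y z (hxy | ⟨hxt, hjy⟩) (hyz | ⟨hyt, hjz⟩)
        · exact Or.inl (htrans _ _ _ hxy hyz)
        · exact Or.inr ⟨htrans _ _ _ hxy hyt, hjz⟩
        · exact Or.inr ⟨hxt, htrans _ _ _ hjy hyz⟩
        · exact absurd (htrans _ _ _ hjy hyt) hjt
      antisymm := by
        rintro x y (hxy | ⟨hxt, hjy⟩) (hyx | ⟨hyt, hjx⟩)
        · exact hantisymm _ _ hxy hyx
        · exact absurd (htrans _ _ _ hjx (htrans _ _ _ hxy hyt)) hjt
        · exact absurd (htrans _ _ _ hjy (htrans _ _ _ hyx hxt)) hjt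
        · exact absurd (htrans _ _ _ hjy hyt) hjt }
  obtain ⟨s, hslin, hsub⟩ := extend_partialOrder r2
  obtain ⟨σ, hσ1, hσ2⟩ := isLinExt_of_extends r2 s (fun a b h => hsub a b h) hslin
  refine ⟨σ, ?_, ?_⟩
  · intro a b hab
    exact hσ1 a b (Or.inl hab)
  · exact hσ2 t j (hsub t j (Or.inr ⟨hrefl t, hrefl j⟩)) (fun h => hne h.symm)

lemma tc_cond1 {n : ℕ} (Q : Fin n → Fin n → Prop)
    (hQ1 : ∀ a c, Q a c → a < c → ∀ b, a < b → b < c → Q b c) :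
    ∀ x z, Relation.ReflTransGen Q x z → ∀ y, x < y → y < z →
      Relation.ReflTransGen Q y z := by
  intro x z hxz
  induction hxz using Relation.ReflTransGen.head_induction_on with
  | refl => intro y h1 h2; exact absurd (h1.trans h2) (lt_irrefl _)
  | head h' tail ih =>
    rename_i a c
    intro y h1 h2
    rcases lt_trichotomy c y with h3 | h3 | h3
    · exact ih y h3 h2
    · exact h3 ▸ tail
    · exact Relation.ReflTransGen.head (hQ1 a c h' (h1.trans h3) y h1 h3) tail

lemma tc_cond2 {n : ℕ} (Q : Fin n → Fin n → Prop)
    (hQ2 : ∀ a c, Q c a → a < c → ∀ b, a < b → b < c → Q b a) :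
    ∀ z x, Relation.ReflTransGen Q z x → ∀ y, x < y → y < z →
      Relation.ReflTransGen Q y x := by
  intro z x hzx
  induction hzx using Relation.ReflTransGen.head_induction_on with
  | refl => intro y h1 h2; exact absurd (h1.trans h2) (lt_irrefl _)
  | head h' tail ih =>
    rename_i a c
    intro y h1 h2
    rcases lt_trichotomy c y with h3 | h3 | h3
    · exact Relation.ReflTransGen.head (hQ2 c a h' (h3.trans h2) y h3 h2) tail
    · exact h3 ▸ tail
    · exact ih y h1 h3

lemma interval_of_closed_R (S : Finset ℕ) (a : ℕ)
    (hsub : ∀ j ∈ S, a < j)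
    (hclosed : ∀ j ∈ S, ∀ b, a < b → b < j → b ∈ S) :
    ∀ j, j ∈ S ↔ (a < j ∧ j ≤ a + S.card) := by
  rcases S.eq_empty_or_nonempty with rfl | hne
  · intro j
    simp only [Finset.notMem_empty, Finset.card_empty, false_iff, not_and]
    omega
  · have hmax := S.max'_mem hne
    have hamax := hsub _ hmax
    have hSeq : S = Finset.Ioc a (S.max' hne) := by
      apply Finset.ext
      intro b
      rw [Finset.mem_Ioc]
      constructor
      · intro hb; exact ⟨hsub b hb, S.le_max' b hb⟩
      · rintro ⟨hb1, hb2⟩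
        rcases eq_or_lt_of_le hb2 with h | h
        · rw [h]; exact hmax
        · exact hclosed _ hmax b hb1 h
    have hcard : S.card = S.max' hne - a := by
      conv_lhs => rw [hSeq]
      rw [Nat.card_Ioc]
    intro j
    constructor
    · intro hj
      have := S.le_max' j hj
      exact ⟨hsub j hj, by omega⟩
    · rintro ⟨h1, h2⟩
      have : j ∈ Finset.Ioc a (S.max' hne) := by
        rw [Finset.mem_Ioc]
        exact ⟨h1, by omega⟩
      rw [← hSeq] at this
      exact this

lemma interval_of_closed_L (S : Finset ℕ) (a : ℕ)
    (hsub : ∀ j ∈ S, j < a)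
    (hclosed : ∀ j ∈ S, ∀ b, j < b → b < a → b ∈ S) :
    ∀ j, j ∈ S ↔ (a - S.card ≤ j ∧ j < a) := by
  rcases S.eq_empty_or_nonempty with rfl | hne
  · intro j
    simp only [Finset.notMem_empty, Finset.card_empty, false_iff, not_and]
    omega
  · have hmin := S.min'_mem hne
    have hamin := hsub _ hmin
    have hSeq : S = Finset.Ico (S.min' hne) a := by
      apply Finset.ext
      intro b
      rw [Finset.mem_Ico]
      constructor
      · intro hb; exact ⟨S.min'_le b hb, hsub b hb⟩
      · rintro ⟨hb1, hb2⟩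
        rcases eq_or_lt_of_le hb1 with h | h
        · rw [← h]; exact hmin
        · exact hclosed _ hmin b h hb2
    have hcard : S.card = a - S.min' hne := by
      conv_lhs => rw [hSeq]
      rw [Nat.card_Ico]
    intro j
    constructor
    · intro hj
      have := S.min'_le j hj
      exact ⟨by omega, hsub j hj⟩
    · rintro ⟨h1, h2⟩
      have : j ∈ Finset.Ico (S.min' hne) a := by
        rw [Finset.mem_Ico]
        exact ⟨by omega, h2⟩
      rw [← hSeq] at this
      exact this

lemma bf_of_linext {n : ℕ} {le : Fin n → Fin n → Prop} {σ : Equiv.Perm (Fin n)}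
    (hσ : IsLinExtOf le σ) {j a : ℕ} (hj1 : 0 < j) (ha1 : 0 < a)
    (hne : j ≠ a) (hjl : j - 1 < n) (hal : a - 1 < n) (hle : le ⟨j-1, hjl⟩ ⟨a-1, hal⟩) :
    Bf (wordOf σ) j a := by
  have h := hσ _ _ hle
  have hne2 : σ⁻¹ (⟨j-1,hjl⟩ : Fin n) ≠ σ⁻¹ ⟨a-1,hal⟩ := by
    intro hcon
    have h3 := congrArg σ hcon
    simp only [Equiv.Perm.coe_inv, Equiv.apply_symm_apply] at h3
    have h4 : j - 1 = a - 1 := congrArg Fin.val h3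
    omega
  have hlt : (σ⁻¹ (⟨j-1,hjl⟩ : Fin n) : ℕ) < (σ⁻¹ (⟨a-1,hal⟩ : Fin n) : ℕ) := by
    rw [Fin.le_def] at h
    exact lt_of_le_of_ne h fun hc => hne2 (Fin.ext hc)
  have hbf := (bf_wordOf σ ⟨j-1,hjl⟩ ⟨a-1,hal⟩).mpr hlt
  have hbf2 : Bf (wordOf σ) (j - 1 + 1) (a - 1 + 1) := hbf
  rw [show j - 1 + 1 = j by omega, show a - 1 + 1 = a by omega] at hbf2
  exact hbf2

lemma forward_dir {n : ℕ} (le : Fin n → Fin n → Prop)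
    (hrefl : ∀ a, le a a) (hantisymm : ∀ a b, le a b → le b a → a = b)
    (htrans : ∀ a b c, le a b → le b c → le a c)
    (T₁ T₂ : Tree0) (hT1 : T₁.size = n) (hT12 : Tree0.tamariLE T₁ T₂)
    (hiff : ∀ σ : Equiv.Perm (Fin n), IsLinExtOf le σ ↔
      (Tree0.tamariLE T₁ (abrShape σ) ∧ Tree0.tamariLE (abrShape σ) T₂)) :
    (∀ a b c : Fin n, a < c → le a c → a < b → b < c → le b c) ∧
    (∀ a b c : Fin n, a < c → le c a → a < b → b < c → le b a) := by
  have hT2 : T₂.size = n := by rw [Tree0.size_tamari hT12, hT1]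
  set Q : Fin n → Fin n → Prop := fun x y =>
    ((y:ℕ) + 1 < (x:ℕ) + 1 ∧ (x:ℕ) + 1 ≤ (y:ℕ) + 1 + Tree0.Rv T₁ 0 ((y:ℕ)+1)) ∨
    ((x:ℕ) + 1 < (y:ℕ) + 1 ∧ (y:ℕ) + 1 ≤ (x:ℕ) + 1 + Tree0.Lv T₂ 0 ((y:ℕ)+1)) with hQdef
  have hstrict : ∀ (σ : Equiv.Perm (Fin n)) (x y : Fin n), x ≠ y → σ⁻¹ x ≤ σ⁻¹ y →
      (σ⁻¹ x : ℕ) < (σ⁻¹ y : ℕ) := by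
    intro σ x y hne hle
    have hne2 : σ⁻¹ x ≠ σ⁻¹ y := by
      intro hcon
      have h3 := congrArg σ hcon
      simp only [Equiv.Perm.coe_inv, Equiv.apply_symm_apply] at h3
      exact hne h3
    rw [Fin.le_def] at hle
    exact lt_of_le_of_ne hle fun h => hne2 (Fin.ext h)
  have hQiff : ∀ σ : Equiv.Perm (Fin n), IsLinExtOf le σ ↔ IsLinExtOf Q σ := by
    intro σ
    rw [hiff σ, M1 T₁ hT1 σ, M2 T₂ hT2 σ]
    constructor
    · rintro ⟨hdec, hinc⟩ x y hQxy
      rcases hQxy with ⟨hq1, hq2⟩ | ⟨hq1, hq2⟩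
      · have hb := hdec ((y:ℕ)+1) ((x:ℕ)+1) (by omega) (by have := y.isLt; omega) hq1 hq2
        rw [bf_wordOf] at hb
        rw [Fin.le_def]; omega
      · have hb := hinc ((y:ℕ)+1) ((x:ℕ)+1) (by omega) (by have := y.isLt; omega) hq1 hq2
        rw [bf_wordOf] at hb
        rw [Fin.le_def]; omega
    · intro hQ
      constructor
      · intro a j ha1 ha2 hj1 hj2
        have hjn : j ≤ n := by
          have := Tree0.rv_bound T₁ 0 a ha1 (by omega)
          omega
        have hQxy : Q ⟨j-1, by omega⟩ ⟨a-1, by omega⟩ := by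
          left
          show a - 1 + 1 < j - 1 + 1 ∧
            j - 1 + 1 ≤ a - 1 + 1 + Tree0.Rv T₁ 0 (a - 1 + 1)
          rw [show a - 1 + 1 = a by omega, show j - 1 + 1 = j by omega]
          exact ⟨hj1, hj2⟩
        exact bf_of_linext hQ (by omega) (by omega) (by omega) _ _ hQxy
      · intro a j ha1 ha2 hj1 hj2
        have hj0 : 0 < j := by
          have := Tree0.lv_bound T₂ 0 a ha1 (by omega)
          omega
        have hQxy : Q ⟨j-1, by omega⟩ ⟨a-1, by omega⟩ := by
          right
          show j - 1 + 1 < a - 1 + 1 ∧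
            a - 1 + 1 ≤ j - 1 + 1 + Tree0.Lv T₂ 0 (a - 1 + 1)
          rw [show a - 1 + 1 = a by omega, show j - 1 + 1 = j by omega]
          exact ⟨hj1, hj2⟩
        exact bf_of_linext hQ hj0 (by omega) (by omega) _ _ hQxy
  have hQsub : ∀ x y, Q x y → le x y := by
    intro x y hQxy
    by_contra hnle
    obtain ⟨σ, hσ1, hσ2⟩ := exists_linext_sep le hrefl hantisymm htrans hnle
    have := (hQiff σ).mp hσ1 x y hQxy
    rw [Fin.le_def] at this
    omega
  have hTCle : ∀ u v, Relation.ReflTransGen Q u v → le u v := by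
    intro u v h
    induction h with
    | refl => exact hrefl u
    | tail h1 h2 ih => exact htrans _ _ _ ih (hQsub _ _ h2)
  have hQr : ∀ x y, le x y → Relation.ReflTransGen Q x y := by
    intro x y hxy
    by_contra hnot
    have hne : x ≠ y := by rintro rfl; exact hnot Relation.ReflTransGen.refl
    obtain ⟨σ, hσ1, hσ2⟩ := exists_linext_sep (Relation.ReflTransGen Q)
      (fun a => Relation.ReflTransGen.refl)
      (fun a b ha hb => hantisymm a b (hTCle _ _ ha) (hTCle _ _ hb))
      (fun a b c ha hb => ha.trans hb) hnot
    have hQσ : IsLinExtOf Q σ := fun a b h => hσ1 a b (Relation.ReflTransGen.single h)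
    have hleσ : IsLinExtOf le σ := (hQiff σ).mpr hQσ
    have := hstrict σ x y hne (hleσ x y hxy)
    omega
  have hQ1 : ∀ a c, Q a c → a < c → ∀ b, a < b → b < c → Q b c := by
    intro a c hQac hac b hab hbc
    rw [Fin.lt_def] at hac hab hbc
    rcases hQac with ⟨hq1, hq2⟩ | ⟨hq1, hq2⟩
    · exfalso; omega
    · right; exact ⟨by omega, by omega⟩
  have hQ2 : ∀ a c, Q c a → a < c → ∀ b, a < b → b < c → Q b a := by
    intro a c hQca hac b hab hbc
    rw [Fin.lt_def] at hac hab hbc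
    rcases hQca with ⟨hq1, hq2⟩ | ⟨hq1, hq2⟩
    · left; exact ⟨by omega, by omega⟩
    · exfalso; omega
  refine ⟨?_, ?_⟩
  · intro a b c hac hle hab hbc
    exact hTCle _ _ (tc_cond1 Q hQ1 a c (hQr a c hle) b hab hbc)
  · intro a b c hac hle hab hbc
    exact hTCle _ _ (tc_cond2 Q hQ2 c a (hQr c a hle) b hab hbc)

lemma backward_dir {n : ℕ} (le : Fin n → Fin n → Prop)
    (hrefl : ∀ a, le a a) (hantisymm : ∀ a b, le a b → le b a → a = b)
    (htrans : ∀ a b c, le a b → le b c → le a c)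
    (h1 : ∀ a b c : Fin n, a < c → le a c → a < b → b < c → le b c)
    (h2 : ∀ a b c : Fin n, a < c → le c a → a < b → b < c → le b a) :
    ∃ T₁ T₂ : Tree0, T₁.size = n ∧ Tree0.tamariLE T₁ T₂ ∧
      ∀ σ : Equiv.Perm (Fin n),
        IsLinExtOf le σ ↔
          (Tree0.tamariLE T₁ (abrShape σ) ∧ Tree0.tamariLE (abrShape σ) T₂) := by
  classical
  set P : ℕ → ℕ → Prop := fun j a =>
    ∃ (hj : j - 1 < n) (ha : a - 1 < n), le ⟨j-1, hj⟩ ⟨a-1, ha⟩ with hPdef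
  set Sdec : ℕ → Finset ℕ := fun a => (Finset.Ioc a n).filter (fun j => P j a) with hSdecdef
  set rv1 : ℕ → ℕ := fun a => (Sdec a).card with hrv1def
  set Sinc : ℕ → Finset ℕ := fun a => (Finset.Ico 1 a).filter (fun j => P j a) with hSincdef
  set lv2 : ℕ → ℕ := fun a => (Sinc a).card with hlv2def
  have hdec_iff : ∀ a, 0 < a → a ≤ n → ∀ j, j ∈ Sdec a ↔ (a < j ∧ j ≤ a + rv1 a) := by
    intro a ha1 ha2
    apply interval_of_closed_R
    · intro j hj
      exact (Finset.mem_Ioc.mp (Finset.mem_filter.mp hj).1).1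
    · intro j hj b hb1 hb2
      obtain ⟨hjIoc, hP⟩ := Finset.mem_filter.mp hj
      obtain ⟨hj1, hj2⟩ := Finset.mem_Ioc.mp hjIoc
      obtain ⟨hjlt, halt, hle⟩ := hP
      refine Finset.mem_filter.mpr ⟨Finset.mem_Ioc.mpr ⟨hb1, by omega⟩, ?_⟩
      refine ⟨by omega, halt, ?_⟩
      exact h2 ⟨a-1, halt⟩ ⟨b-1, by omega⟩ ⟨j-1, hjlt⟩
        (by rw [Fin.lt_def]; show a-1 < j-1; omega) hle
        (by rw [Fin.lt_def]; show a-1 < b-1; omega)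
        (by rw [Fin.lt_def]; show b-1 < j-1; omega)
  have hinc_iff : ∀ a, 0 < a → a ≤ n → ∀ j, j ∈ Sinc a ↔ (a - lv2 a ≤ j ∧ j < a) := by
    intro a ha1 ha2
    apply interval_of_closed_L
    · intro j hj
      exact (Finset.mem_Ico.mp (Finset.mem_filter.mp hj).1).2
    · intro j hj b hb1 hb2
      obtain ⟨hjIco, hP⟩ := Finset.mem_filter.mp hj
      obtain ⟨hj1, hj2⟩ := Finset.mem_Ico.mp hjIco
      obtain ⟨hjlt, halt, hle⟩ := hP
      refine Finset.mem_filter.mpr ⟨Finset.mem_Ico.mpr ⟨by omega, hb2⟩, ?_⟩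
      refine ⟨by omega, halt, ?_⟩
      exact h1 ⟨j-1, hjlt⟩ ⟨b-1, by omega⟩ ⟨a-1, halt⟩
        (by rw [Fin.lt_def]; show j-1 < a-1; omega) hle
        (by rw [Fin.lt_def]; show j-1 < b-1; omega)
        (by rw [Fin.lt_def]; show b-1 < a-1; omega)
  have hrvb : ∀ a, 0 < a → a ≤ n → a + rv1 a ≤ n := by
    intro a ha1 ha2
    have hc : rv1 a ≤ (Finset.Ioc a n).card := Finset.card_filter_le _ _
    rw [Nat.card_Ioc] at hc
    omega
  have hlvb : ∀ a, 0 < a → a ≤ n → lv2 a < a := by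
    intro a ha1 ha2
    have hc : lv2 a ≤ (Finset.Ico 1 a).card := Finset.card_filter_le _ _
    rw [Nat.card_Ico] at hc
    omega
  have hSdec_le : ∀ a j, j ∈ Sdec a → j ≤ n := by
    intro a j hj
    exact (Finset.mem_Ioc.mp (Finset.mem_filter.mp hj).1).2
  obtain ⟨T₁, hT₁s, hT₁v⟩ := Tree0.exists_tree_of_rv rv1 n 0
    (fun a ha1 ha2 => by have := hrvb a ha1 (by omega); omega)
    (by
      intro x d hx1 hx2 hxd hdx
      have hdmem : d ∈ Sdec x := (hdec_iff x hx1 (by omega) d).mpr ⟨hxd, hdx⟩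
      have hdn : d ≤ n := hSdec_le x d hdmem
      by_cases h0 : rv1 d = 0
      · omega
      · have hemem : d + rv1 d ∈ Sdec d :=
          (hdec_iff d (by omega) hdn (d + rv1 d)).mpr ⟨by omega, le_rfl⟩
        have hen : d + rv1 d ≤ n := hSdec_le d _ hemem
        obtain ⟨_, he1, hd1', hlee⟩ := Finset.mem_filter.mp hemem
        obtain ⟨_, hd1'', hx1', hled⟩ := Finset.mem_filter.mp hdmem
        have hPex : P (d + rv1 d) x := ⟨he1, hx1', htrans _ _ _ hlee hled⟩
        have hememx : (d + rv1 d) ∈ Sdec x :=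
          Finset.mem_filter.mpr ⟨Finset.mem_Ioc.mpr ⟨by omega, hen⟩, hPex⟩
        have := ((hdec_iff x hx1 (by omega) (d + rv1 d)).mp hememx).2
        omega)
  obtain ⟨T₂, hT₂s, hT₂v⟩ := Tree0.exists_tree_of_lv lv2 n 0
    (fun a ha1 ha2 => by have := hlvb a ha1 (by omega); omega)
    (by
      intro d x hd1 hd2 hxd hdx hx0
      have hxmem : x ∈ Sinc d := (hinc_iff d hd1 (by omega) x).mpr ⟨by omega, hxd⟩
      by_cases h0 : lv2 x = 0
      · omega
      · have hlx : lv2 x < x := hlvb x hx0 (by omega)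
        have hemem : x - lv2 x ∈ Sinc x :=
          (hinc_iff x hx0 (by omega) (x - lv2 x)).mpr ⟨le_rfl, by omega⟩
        obtain ⟨hIco1, he1, hx1', hlee⟩ := Finset.mem_filter.mp hemem
        obtain ⟨_, hx1'', hd1', hled⟩ := Finset.mem_filter.mp hxmem
        have hPex : P (x - lv2 x) d := ⟨he1, hd1', htrans _ _ _ hlee hled⟩
        have he0 : 1 ≤ x - lv2 x := (Finset.mem_Ico.mp hIco1).1
        have hememd : (x - lv2 x) ∈ Sinc d :=
          Finset.mem_filter.mpr ⟨Finset.mem_Ico.mpr ⟨he0, by omega⟩, hPex⟩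
        have := ((hinc_iff d hd1 (by omega) (x - lv2 x)).mp hememd).1
        omega)
  have hmain : ∀ σ : Equiv.Perm (Fin n),
      IsLinExtOf le σ ↔
        (Tree0.tamariLE T₁ (abrShape σ) ∧ Tree0.tamariLE (abrShape σ) T₂) := by
    intro σ
    rw [M1 T₁ hT₁s σ, M2 T₂ hT₂s σ]
    constructor
    · intro hle
      constructor
      · intro a j ha1 ha2 hj1 hj2
        have hrv := hT₁v a ha1 (by omega)
        have hjm : j ∈ Sdec a := (hdec_iff a ha1 ha2 j).mpr ⟨hj1, by omega⟩
        obtain ⟨hjIoc, hjlt, halt, hleP⟩ := Finset.mem_filter.mp hjm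
        exact bf_of_linext hle (by omega) (by omega) (by omega) _ _ hleP
      · intro a j ha1 ha2 hj1 hj2
        have hlv := hT₂v a ha1 (by omega)
        have hlvlt := hlvb a ha1 ha2
        have hjm : j ∈ Sinc a := (hinc_iff a ha1 ha2 j).mpr ⟨by omega, hj1⟩
        obtain ⟨hjIco, hjlt, halt, hleP⟩ := Finset.mem_filter.mp hjm
        have hj0 : 1 ≤ j := (Finset.mem_Ico.mp hjIco).1
        exact bf_of_linext hle (by omega) (by omega) (by omega) _ _ hleP
    · rintro ⟨hdec, hinc⟩ x y hxy
      by_cases hxyeq : x = y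
      · rw [hxyeq]
      rcases lt_trichotomy (x:ℕ) (y:ℕ) with hc | hc | hc
      · -- increasing pair
        have hyn : (y:ℕ) + 1 ≤ n := y.isLt
        have hPxy : P ((x:ℕ)+1) ((y:ℕ)+1) := by
          refine ⟨by omega, by omega, ?_⟩
          show le ⟨(x:ℕ)+1-1, _⟩ ⟨(y:ℕ)+1-1, _⟩
          have hx' : (⟨(x:ℕ)+1-1, by omega⟩ : Fin n) = x := by apply Fin.ext; show (x:ℕ)+1-1 = x; omega
          have hy' : (⟨(y:ℕ)+1-1, by omega⟩ : Fin n) = y := by apply Fin.ext; show (y:ℕ)+1-1 = y; omega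
          rw [hx', hy']
          exact hxy
        have hxm : (x:ℕ)+1 ∈ Sinc ((y:ℕ)+1) :=
          Finset.mem_filter.mpr ⟨Finset.mem_Ico.mpr ⟨by omega, by omega⟩, hPxy⟩
        have hmem := ((hinc_iff ((y:ℕ)+1) (by omega) hyn ((x:ℕ)+1)).mp hxm).1
        have hlv := hT₂v ((y:ℕ)+1) (by omega) (by omega)
        have hbf := hinc ((y:ℕ)+1) ((x:ℕ)+1) (by omega) hyn (by omega) (by omega)
        rw [bf_wordOf] at hbf
        rw [Fin.le_def]
        omega
      · exact absurd (Fin.ext hc) hxyeq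
      · -- decreasing pair
        have hxn : (x:ℕ) + 1 ≤ n := x.isLt
        have hPxy : P ((x:ℕ)+1) ((y:ℕ)+1) := by
          refine ⟨by omega, by omega, ?_⟩
          show le ⟨(x:ℕ)+1-1, _⟩ ⟨(y:ℕ)+1-1, _⟩
          have hx' : (⟨(x:ℕ)+1-1, by omega⟩ : Fin n) = x := by apply Fin.ext; show (x:ℕ)+1-1 = x; omega
          have hy' : (⟨(y:ℕ)+1-1, by omega⟩ : Fin n) = y := by apply Fin.ext; show (y:ℕ)+1-1 = y; omega
          rw [hx', hy']
          exact hxy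
        have hxm : (x:ℕ)+1 ∈ Sdec ((y:ℕ)+1) :=
          Finset.mem_filter.mpr ⟨Finset.mem_Ioc.mpr ⟨by omega, hxn⟩, hPxy⟩
        have hmem := ((hdec_iff ((y:ℕ)+1) (by omega) (by omega) ((x:ℕ)+1)).mp hxm).2
        have hrv := hT₁v ((y:ℕ)+1) (by omega) (by omega)
        have hbf := hdec ((y:ℕ)+1) ((x:ℕ)+1) (by omega) (by omega) (by omega) (by omega)
        rw [bf_wordOf] at hbf
        rw [Fin.le_def]
        omega
  have hT12 : Tree0.tamariLE T₁ T₂ := by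
    obtain ⟨σ₀, hσ₀⟩ := exists_linext le hrefl hantisymm htrans
    obtain ⟨ha, hb⟩ := (hmain σ₀).mp hσ₀
    exact ha.trans hb
  exact ⟨T₁, T₂, hT₁s, hT12, hmain⟩


/-- A partial order `⊴` on `{1,…,n}` is a Tamari interval-poset
(its linear extensions are exactly the union of the sylvester classes of the trees in
some Tamari interval `[T₁, T₂]`) iff it satisfies:
(1) `a < c` and `a ⊴ c` imply `b ⊴ c` for all `a < b < c`, and
(2) `a < c` and `c ⊴ a` imply `b ⊴ a` for all `a < b < c`. -/
theorem interval_poset_characterization (n : ℕ)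
    (le : Fin n → Fin n → Prop)
    (hrefl : ∀ a, le a a)
    (hantisymm : ∀ a b, le a b → le b a → a = b)
    (htrans : ∀ a b c, le a b → le b c → le a c) :
    (∃ T₁ T₂ : Tree0, T₁.size = n ∧ Tree0.tamariLE T₁ T₂ ∧
        ∀ σ : Equiv.Perm (Fin n),
          IsLinExtOf le σ ↔
            (Tree0.tamariLE T₁ (abrShape σ) ∧ Tree0.tamariLE (abrShape σ) T₂)) ↔
      ((∀ a b c : Fin n, a < c → le a c → a < b → b < c → le b c) ∧
       (∀ a b c : Fin n, a < c → le c a → a < b → b < c → le b a)) := by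
  constructor
  · rintro ⟨T₁, T₂, hT1, hT12, hiff⟩
    exact forward_dir le hrefl hantisymm htrans T₁ T₂ hT1 hT12 hiff
  · rintro ⟨h1, h2⟩
    exact backward_dir le hrefl hantisymm htrans h1 h2
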